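/- Let E be a real inner product space, Z a type, and ℓ : E → Z → Z → ℝ a pairwise loss differentiable in its first argument with ‖∇ℓ(v, z, z')‖ ≤ L for all v ∈ E and z, z' ∈ Z (gradient taken in the first argument). Fix k ≥ 1, α ≥ 0, a point a ∈ Z and families b, b' : Fin k → Z, and suppose there is a subset U ⊆ Fin k with card(U) ≤ m such that b_j = b'_j for all j ∉ U. Define G(v) = v − (α/k)·Σ_{j=1}^{k} ∇ℓ(v, a, b_j) and G'(v) = v − (α/k)·Σ_{j=1}^{k} ∇ℓ(v, a, b'_j), and assume G is η-expansive. Then for all w, w' ∈ E: ‖G(w) − G'(w')‖ ≤ η·‖w − w'‖ + (m/k)·2αL. -/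

import Mathlib

/-- **Claim 2 of Lemma 6 / claims 2–3 of Lemma 7.** Pairwise-SGD updates built from the same
current example `a` and previous examples `b, b'` differing on at most `m` indices satisfy
`‖G w − G' w'‖ ≤ η·‖w − w'‖ + (m/k)·2αL` whenever `G` is `η`-expansive. -/
theorem pairwise_sgd_update_diff_same_example
    {E : Type*} [NormedAddCommGroup E] [InnerProductSpace ℝ E] {Z : Type*}
    (ℓ : E → Z → Z → ℝ) (g : E → Z → Z → E) (L α : ℝ) (hα : 0 ≤ α)
    (k : ℕ) (hk : 1 ≤ k)
    (hdiff : ∀ (v : E) (z z' : Z),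
      HasFDerivAt (fun u => ℓ u z z') (InnerProductSpace.toDualMap ℝ E (g v z z')) v)
    (hL : ∀ (v : E) (z z' : Z), ‖g v z z'‖ ≤ L)
    (a : Z) (b b' : Fin k → Z) (m : ℕ) (U : Finset (Fin k)) (hU : U.card ≤ m)
    (hbb' : ∀ j, j ∉ U → b j = b' j)
    (G G' : E → E)
    (hG : ∀ v, G v = v - (α / k) • ∑ j, g v a (b j))
    (hG' : ∀ v, G' v = v - (α / k) • ∑ j, g v a (b' j))
    (η : ℝ) (hexp : ∀ v v', ‖G v - G v'‖ ≤ η * ‖v - v'‖)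
    (w w' : E) :
    ‖G w - G' w'‖ ≤ η * ‖w - w'‖ + (m / k : ℝ) * (2 * α * L) := by

  have hLnn : 0 ≤ L := le_trans (norm_nonneg _) (hL w a a)
  have key : ‖G w' - G' w'‖ ≤ (m / k : ℝ) * (2 * α * L) := by
    have hdiffsum : G w' - G' w' =
        (α / k) • ∑ j ∈ U, (g w' a (b' j) - g w' a (b j)) := by
      rw [hG, hG']
      have : ∑ j ∈ U, (g w' a (b' j) - g w' a (b j)) =
          (∑ j, g w' a (b' j)) - ∑ j, g w' a (b j) := by
        rw [Finset.sum_sub_distrib]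
        have h1 : ∑ j ∈ U, g w' a (b' j) = ∑ j, g w' a (b' j) - ∑ j ∈ Uᶜ, g w' a (b' j) := by
          rw [eq_sub_iff_add_eq, Finset.sum_add_sum_compl]
        have h2 : ∑ j ∈ U, g w' a (b j) = ∑ j, g w' a (b j) - ∑ j ∈ Uᶜ, g w' a (b j) := by
          rw [eq_sub_iff_add_eq, Finset.sum_add_sum_compl]
        have h3 : ∑ j ∈ Uᶜ, g w' a (b' j) = ∑ j ∈ Uᶜ, g w' a (b j) := by
          refine Finset.sum_congr rfl fun j hj => ?_
          rw [hbb' j (Finset.mem_compl.mp hj)]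
        rw [h1, h2, h3]; abel
      rw [this, smul_sub]; abel
    rw [hdiffsum, norm_smul]
    have hbound : ‖∑ j ∈ U, (g w' a (b' j) - g w' a (b j))‖ ≤ (U.card : ℝ) * (2 * L) := by
      calc ‖∑ j ∈ U, (g w' a (b' j) - g w' a (b j))‖
          ≤ ∑ j ∈ U, ‖g w' a (b' j) - g w' a (b j)‖ := norm_sum_le _ _
        _ ≤ ∑ _j ∈ U, (2 * L) := by
            refine Finset.sum_le_sum fun j _ => ?_
            calc ‖g w' a (b' j) - g w' a (b j)‖ ≤ ‖g w' a (b' j)‖ + ‖g w' a (b j)‖ :=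
                  norm_sub_le _ _
              _ ≤ L + L := add_le_add (hL _ _ _) (hL _ _ _)
              _ = 2 * L := by ring
        _ = (U.card : ℝ) * (2 * L) := by rw [Finset.sum_const, nsmul_eq_mul]
    have hkpos : (0:ℝ) < k := by exact_mod_cast hk
    have hαk : ‖(α / k : ℝ)‖ = α / k := by
      rw [Real.norm_eq_abs, abs_of_nonneg (div_nonneg hα hkpos.le)]
    rw [hαk]
    calc (α / k) * ‖∑ j ∈ U, (g w' a (b' j) - g w' a (b j))‖
        ≤ (α / k) * ((U.card : ℝ) * (2 * L)) := by
          exact mul_le_mul_of_nonneg_left hbound (div_nonneg hα hkpos.le)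
      _ ≤ (α / k) * ((m : ℝ) * (2 * L)) := by
          refine mul_le_mul_of_nonneg_left ?_ (div_nonneg hα hkpos.le)
          exact mul_le_mul_of_nonneg_right (by exact_mod_cast hU)
            (by positivity)
      _ = (m / k : ℝ) * (2 * α * L) := by field_simp
  calc ‖G w - G' w'‖ = ‖(G w - G w') + (G w' - G' w')‖ := by abel_nf
    _ ≤ ‖G w - G w'‖ + ‖G w' - G' w'‖ := norm_add_le _ _
    _ ≤ η * ‖w - w'‖ + (m / k : ℝ) * (2 * α * L) := add_le_add (hexp w w') key
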